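/- Let A = k[x]/(x²−hx−t) with the Frobenius structure above and let μ̃ := μ − (μΔ)⊗ε (so μ̃(a⊗b) = ab − ε(b)μΔ(a)). Then the sequence 0 → A →^Δ A⊗A →^{μ̃} A → 0 admits the chain contraction given by id⊗η and id⊗ε: μ̃∘(id⊗η) = id_A, (id⊗ε)∘Δ = id_A, and Δ∘(id⊗ε) + (id⊗η)∘μ̃ = id_{A⊗A}. In particular this sequence is split exact. -/

import Mathlib

open Polynomial TensorProduct

/-- The Frobenius algebra `C_{h,t} = k[x]/(x² - hx - t)`. -/
noncomputable abbrev Cht (k : Type) [CommRing k] (h t : k) : Type :=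
  AdjoinRoot (X ^ 2 - C h * X - C t : k[X])

/-- The generator `x` of `C_{h,t}`. -/
noncomputable abbrev xg (k : Type) [CommRing k] (h t : k) : Cht k h t :=
  AdjoinRoot.root _

lemma cht_monic (k : Type) [CommRing k] (h t : k) :
    (X ^ 2 - C h * X - C t : k[X]).Monic := by
  have e : (X ^ 2 - C h * X - C t : k[X]) = X ^ 2 - (C h * X + C t) := by ring
  rw [e]
  apply Polynomial.monic_X_pow_sub
  apply lt_of_le_of_lt (Polynomial.degree_add_le _ _)
  rw [max_lt_iff]
  constructor
  · calc (C h * X).degree ≤ (C h).degree + X.degree := Polynomial.degree_mul_le _ _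
      _ ≤ 0 + 1 := add_le_add Polynomial.degree_C_le Polynomial.degree_X_le
      _ < 2 := by norm_num
  · exact lt_of_le_of_lt Polynomial.degree_C_le (by norm_num)

lemma cht_natDegree_le (k : Type) [CommRing k] (h t : k) :
    (X ^ 2 - C h * X - C t : k[X]).natDegree ≤ 2 := by
  compute_degree

/-- Linear maps out of `Cht` are determined by values on `1` and `x`. -/
lemma cht_ext (k : Type) [CommRing k] (h t : k) {M : Type} [AddCommGroup M] [Module k M]
    (f g : Cht k h t →ₗ[k] M) (h1 : f 1 = g 1) (hx : f (xg k h t) = g (xg k h t)) :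
    f = g := by
  let pb := AdjoinRoot.powerBasis' (cht_monic k h t)
  apply pb.basis.ext
  intro i
  rw [pb.basis_eq_pow]
  have hd : pb.dim ≤ 2 := by
    simpa only [pb, AdjoinRoot.powerBasis'_dim] using cht_natDegree_le k h t
  have hi : (i : ℕ) < 2 := lt_of_lt_of_le i.isLt hd
  interval_cases hiv : (i : ℕ)
  · simpa using h1
  · simpa [pb] using hx

/-- The sequence `0 → A →^{Δ} A⊗A →^{μ̃} A → 0` (with `μ̃ = μ − (μΔ)⊗ε`) admits the chain
contraction `id⊗η`, `id⊗ε`: `μ̃∘(id⊗η) = id`, `(id⊗ε)∘Δ = id`,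
`Δ∘(id⊗ε) + (id⊗η)∘μ̃ = id`; in particular it is split exact. -/
theorem stmt5 (k : Type) [CommRing k] (h t : k)
    (Δ : Cht k h t →ₗ[k] Cht k h t ⊗[k] Cht k h t)
    (ε : Cht k h t →ₗ[k] k)
    (hΔ1 : Δ 1 = 1 ⊗ₜ[k] xg k h t + xg k h t ⊗ₜ[k] 1 - h • ((1 : Cht k h t) ⊗ₜ[k] 1))
    (hΔx : Δ (xg k h t) = xg k h t ⊗ₜ[k] xg k h t + t • ((1 : Cht k h t) ⊗ₜ[k] 1))
    (hε1 : ε 1 = 0) (hεx : ε (xg k h t) = 1)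
    -- the twisted action `μ̃(a⊗b) = ab − ε(b)·μΔ(a)`
    (μt : Cht k h t ⊗[k] Cht k h t →ₗ[k] Cht k h t)
    (hμt : ∀ a b : Cht k h t,
      μt (a ⊗ₜ[k] b) = a * b - ε b • (LinearMap.mul' k (Cht k h t) (Δ a)))
    -- `s₁ = id ⊗ η : A → A⊗A`
    (s₁ : Cht k h t →ₗ[k] Cht k h t ⊗[k] Cht k h t)
    (hs₁ : ∀ a : Cht k h t, s₁ a = a ⊗ₜ[k] 1)
    -- `s₂ = id ⊗ ε : A⊗A → A`
    (s₂ : Cht k h t ⊗[k] Cht k h t →ₗ[k] Cht k h t)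
    (hs₂ : ∀ a b : Cht k h t, s₂ (a ⊗ₜ[k] b) = ε b • a) :
    μt.comp s₁ = LinearMap.id ∧
    s₂.comp Δ = LinearMap.id ∧
    Δ.comp s₂ + s₁.comp μt = LinearMap.id ∧
    μt.comp Δ = 0 ∧
    Function.Injective Δ ∧
    Function.Surjective μt ∧
    LinearMap.range Δ = LinearMap.ker μt := by
  set A := Cht k h t
  set x := xg k h t with hxdef
  -- key: μΔ on generators
  have hmΔ1 : LinearMap.mul' k A (Δ 1) = x + x - h • 1 := by
    rw [hΔ1]; simp [LinearMap.mul'_apply]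
  have hmΔx : LinearMap.mul' k A (Δ x) = x * x + t • 1 := by
    rw [hΔx]; simp [LinearMap.mul'_apply]
  have h1 : μt.comp s₁ = LinearMap.id := by
    ext a
    simp [hs₁, hμt, hε1]
  have h2 : s₂.comp Δ = LinearMap.id := by
    apply cht_ext k h t
    · simp [hΔ1, hs₂, hε1, hεx]
    · simp [← hxdef, hΔx, hs₂, hε1, hεx]
  have h3 : Δ.comp s₂ + s₁.comp μt = LinearMap.id := by
    apply TensorProduct.ext
    apply cht_ext k h t <;> apply cht_ext k h t <;>
      simp only [LinearMap.compr₂_apply, LinearMap.compr₂ₛₗ_apply, TensorProduct.mk_apply, LinearMap.add_apply,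
        LinearMap.comp_apply, LinearMap.id_apply, hs₂, hμt, hs₁, hε1, hεx, hmΔ1, hmΔx,
        zero_smul, one_smul, map_zero, TensorProduct.zero_tmul, map_smul, map_add, map_sub, mul_one, one_mul, hΔ1, hΔx,
        LinearMap.mul'_apply,
        sub_tmul, add_tmul, ← TensorProduct.smul_tmul', ← hxdef] <;>
      module
  have h4 : μt.comp Δ = 0 := by
    ext a
    have ha : s₂ (Δ a) = a := by simpa using LinearMap.ext_iff.mp h2 a
    have h3a := LinearMap.ext_iff.mp h3 (Δ a)
    simp only [LinearMap.add_apply, LinearMap.comp_apply, LinearMap.id_apply, ha] at h3a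
    have h5 : s₁ (μt (Δ a)) = 0 := by
      have := add_left_cancel (a := Δ a) (b := s₁ (μt (Δ a))) (c := 0)
        (by rw [add_zero]; exact h3a)
      exact this
    have h6 := LinearMap.ext_iff.mp h1 (μt (Δ a))
    simp only [LinearMap.comp_apply, LinearMap.id_apply, h5, map_zero] at h6
    simp [← h6]
  refine ⟨h1, h2, h3, h4, ?_, ?_, ?_⟩
  · have : Function.LeftInverse s₂ Δ := fun a => by
      have := LinearMap.ext_iff.mp h2 a
      simpa using this
    exact this.injective
  · intro a
    refine ⟨s₁ a, ?_⟩
    have := LinearMap.ext_iff.mp h1 a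
    simpa using this
  · ext y
    simp only [LinearMap.mem_range, LinearMap.mem_ker]
    constructor
    · rintro ⟨a, rfl⟩
      have := LinearMap.ext_iff.mp h4 a
      simpa using this
    · intro hy
      refine ⟨s₂ y, ?_⟩
      have := LinearMap.ext_iff.mp h3 y
      simp only [LinearMap.add_apply, LinearMap.comp_apply, LinearMap.id_apply] at this
      rw [hy, map_zero, add_zero] at this
      exact this
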